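/- Let F be a field and let S, P be disjoint finite sets with pairwise disjoint copies S′, S″, P′, P″. Let V₁, V̂₁ ⊆ F_{S′∪P′∪S″∪P″} be adjoints of each other with respect to the copies S′∪P′ and S″∪P″, and let V₂, V̂₂ ⊆ F_{S′∪S″} be adjoints of each other with respect to the copies S′ and S″. Then the matched compositions V₁ ↔ V₂ and V̂₁ ↔ V̂₂ (over the shared index set S′∪S″, subspaces of F_{P′∪P″}) are adjoints of each other with respect to the copies P′ and P″. In particular, if V₁ and V₂ are reciprocal (self-adjoint), then so is V₁ ↔ V₂. -/

import Mathlib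

noncomputable section

open scoped BigOperators

/-- Dot product of two vectors indexed by a finite type. -/
def dotProd {F X : Type*} [Field F] [Fintype X] (f g : X → F) : F :=
  ∑ x, f x * g x

/-- Dot product on `F_{S∪P}` (encoded as pairs). -/
def dotM {F S P : Type*} [Field F] [Fintype S] [Fintype P]
    (x y : (S → F) × (P → F)) : F :=
  dotProd x.1 y.1 + dotProd x.2 y.2

/-- Orthogonal complement of a collection on `X′∪X″` (two copies of `X`). -/
def perpFun2 {F X : Type*} [Field F] [Fintype X]
    (K : Set ((X → F) × (X → F))) : Set ((X → F) × (X → F)) :=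
  {y | ∀ x ∈ K, dotProd x.1 y.1 + dotProd x.2 y.2 = 0}

/-- Adjoint of a collection on `X′∪X″`: `{(a,b) : (b,−a) ∈ V^⊥}`. -/
def adjFun {F X : Type*} [Field F] [Fintype X]
    (V : Set ((X → F) × (X → F))) : Set ((X → F) × (X → F)) :=
  {z | (z.2, -z.1) ∈ perpFun2 V}

/-- Orthogonal complement of a collection on `(S′∪P′)∪(S″∪P″)`. -/
def perpM2 {F S P : Type*} [Field F] [Fintype S] [Fintype P]
    (K : Set (((S → F) × (P → F)) × ((S → F) × (P → F)))) :
    Set (((S → F) × (P → F)) × ((S → F) × (P → F))) :=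
  {y | ∀ x ∈ K, dotM x.1 y.1 + dotM x.2 y.2 = 0}

/-- Adjoint of a collection on `(S′∪P′)∪(S″∪P″)` w.r.t. the copies
`S′∪P′` and `S″∪P″`. -/
def adjM {F S P : Type*} [Field F] [Fintype S] [Fintype P]
    (V : Set (((S → F) × (P → F)) × ((S → F) × (P → F)))) :
    Set (((S → F) × (P → F)) × ((S → F) × (P → F))) :=
  {z | (z.2, -z.1) ∈ perpM2 V}

/-- Matched composition of `V₁ ⊆ F_{S′∪P′∪S″∪P″}` with `V₂ ⊆ F_{S′∪S″}`
over the shared index set `S′∪S″`; a subset of `F_{P′∪P″}`. -/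
def portComp {F S P : Type*} [Field F]
    (V₁ : Set (((S → F) × (P → F)) × ((S → F) × (P → F))))
    (V₂ : Set ((S → F) × (S → F))) : Set ((P → F) × (P → F)) :=
  {z | ∃ f₁ f₂ : S → F, ((f₁, z.1), (f₂, z.2)) ∈ V₁ ∧ (f₁, f₂) ∈ V₂}

set_option linter.unusedSectionVars false

section Aux
variable {F S P : Type*} [Field F] [Fintype S] [Fintype P]

lemma dotProd_add_left (f f' g : S → F) :
    dotProd (f + f') g = dotProd f g + dotProd f' g := by
  simp [dotProd, add_mul, Finset.sum_add_distrib]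

lemma dotProd_smul_left (c : F) (f g : S → F) :
    dotProd (c • f) g = c * dotProd f g := by
  simp [dotProd, Finset.mul_sum, mul_assoc]

lemma dotProd_neg_right (f g : S → F) : dotProd f (-g) = -dotProd f g := by
  simp [dotProd]

/-- dotProd as a linear map in the first argument. -/
def dotL (g : S → F) : (S → F) →ₗ[F] F where
  toFun f := dotProd f g
  map_add' f f' := dotProd_add_left f f' g
  map_smul' c f := dotProd_smul_left c f g

lemma dotL_apply (g f : S → F) : dotL g f = dotProd f g := rfl

/-- Any linear functional on `(S → F) × (S → F)` is of the form
`(f₁,f₂) ↦ dotProd f₁ g₂ - dotProd f₂ g₁` for some `g₁ g₂`. -/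
lemma exists_repr (ν : ((S → F) × (S → F)) →ₗ[F] F) :
    ∃ g₁ g₂ : S → F, ∀ f₁ f₂ : S → F,
      ν (f₁, f₂) = dotProd f₁ g₂ - dotProd f₂ g₁ := by
  classical
  refine ⟨fun s => -ν (0, Pi.single s 1), fun s => ν (Pi.single s 1, 0), fun f₁ f₂ => ?_⟩
  have h1 : (f₁, f₂) = (∑ s, f₁ s • ((Pi.single s 1, 0) : (S → F) × (S → F)))
      + ∑ s, f₂ s • ((0, Pi.single s 1) : (S → F) × (S → F)) := by
    ext t
    · simp [Prod.fst_sum, Prod.snd_sum, Finset.sum_apply, Pi.single_apply, mul_comm]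
    · simp [Prod.fst_sum, Prod.snd_sum, Finset.sum_apply, Pi.single_apply, mul_comm]
  rw [h1, map_add, map_sum, map_sum]
  simp only [map_smul, smul_eq_mul]
  simp [dotProd, mul_neg, sub_neg_eq_add, Finset.sum_neg_distrib, sub_eq_add_neg]

end Aux

section Main
variable {F S P : Type*} [Field F] [Fintype S] [Fintype P]

abbrev EE (F S P : Type*) [Field F] := (((S → F) × (P → F)) × ((S → F) × (P → F)))

/-- projection `((f₁,p₁),(f₂,p₂)) ↦ (f₁,f₂)` as a linear map. -/
def prSS : EE F S P →ₗ[F] ((S → F) × (S → F)) :=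
  ((LinearMap.fst F _ _).comp (LinearMap.fst F _ _)).prod
    ((LinearMap.fst F _ _).comp (LinearMap.snd F _ _))

@[simp] lemma prSS_apply (x : EE F S P) : prSS x = (x.1.1, x.2.1) := rfl

/-- the functional `x ↦ dotProd x.1.2 h₂ - dotProd x.2.2 h₁`. -/
def ellL (h₁ h₂ : P → F) : EE F S P →ₗ[F] F :=
  (dotL h₂).comp ((LinearMap.snd F _ _).comp (LinearMap.fst F _ _))
    - (dotL h₁).comp ((LinearMap.snd F _ _).comp (LinearMap.snd F _ _))

@[simp] lemma ellL_apply (h₁ h₂ : P → F) (x : EE F S P) :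
    ellL h₁ h₂ x = dotProd x.1.2 h₂ - dotProd x.2.2 h₁ := rfl

lemma main_lemma (V₁ : Submodule F (EE F S P)) (V₂ : Submodule F ((S → F) × (S → F))) :
    portComp (adjM (V₁ : Set (EE F S P))) (adjFun (V₂ : Set ((S → F) × (S → F))))
      = adjFun (portComp (V₁ : Set (EE F S P)) (V₂ : Set ((S → F) × (S → F)))) := by
  apply Set.eq_of_subset_of_subset
  · rintro ⟨h₁, h₂⟩ ⟨g₁, g₂, hg1, hg2⟩
    rintro ⟨p₁, p₂⟩ ⟨f₁, f₂, hf1, hf2⟩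
    have e1 : dotProd f₁ g₂ + dotProd p₁ h₂ + (dotProd f₂ (-g₁) + dotProd p₂ (-h₁)) = 0 :=
      hg1 ((f₁, p₁), (f₂, p₂)) hf1
    have e2 : dotProd f₁ g₂ + dotProd f₂ (-g₁) = 0 := hg2 (f₁, f₂) hf2
    show dotProd p₁ h₂ + dotProd p₂ (-h₁) = 0
    simp only [dotProd_neg_right] at e1 e2 ⊢
    linear_combination e1 - e2
  · rintro ⟨h₁, h₂⟩ hz
    -- hz : ∀ (p₁,p₂) ∈ portComp V₁ V₂, dotProd p₁ h₂ - dotProd p₂ h₁ = 0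
    set Ψ : EE F S P →ₗ[F] ((S → F) × (S → F)) × F :=
      (prSS).prod (ellL h₁ h₂) with hΨ
    set M' : Submodule F (((S → F) × (S → F)) × F) :=
      (V₁.map Ψ) ⊔ (V₂.map (LinearMap.inl F _ F)) with hM'
    have hnm : ((0 : (S → F) × (S → F)), (1 : F)) ∉ M' := by
      intro hmem
      rw [hM', Submodule.mem_sup] at hmem
      obtain ⟨y, hy, z, hz', hyz⟩ := hmem
      obtain ⟨v, hv, rfl⟩ := hy
      obtain ⟨w, hw, rfl⟩ := hz'
      have h1 : prSS v + w = 0 := congrArg Prod.fst hyz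
      have h2 : ellL h₁ h₂ v = 1 := by
        have := congrArg Prod.snd hyz
        simpa [hΨ] using this
      have hwv : prSS v ∈ V₂ := by
        have : prSS v = -w := by
          rw [eq_neg_iff_add_eq_zero]; exact h1
        rw [this]; exact V₂.neg_mem hw
      have hport : ((v.1.2, v.2.2) : (P → F) × (P → F)) ∈
          portComp (V₁ : Set (EE F S P)) (V₂ : Set ((S → F) × (S → F))) := by
        exact ⟨v.1.1, v.2.1, by simpa using hv, hwv⟩
      have h3 : dotProd v.1.2 h₂ + dotProd v.2.2 (-h₁) = 0 := hz _ hport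
      rw [dotProd_neg_right] at h3
      rw [ellL_apply] at h2
      exact one_ne_zero (α := F) (by linear_combination h3 - h2)
    obtain ⟨ρ, hρ1, hρ2⟩ := M'.exists_dual_map_eq_bot_of_notMem hnm inferInstance
    have hρ0 : ∀ m ∈ M', ρ m = 0 := by
      intro m hm
      have : ρ m ∈ M'.map ρ := ⟨m, hm, rfl⟩
      rw [hρ2] at this
      simpa using this
    set c : F := ρ (0, 1) with hc
    set ν : ((S → F) × (S → F)) →ₗ[F] F := c⁻¹ • (ρ.comp (LinearMap.inl F _ F)) with hν
    obtain ⟨g₁, g₂, hg⟩ := exists_repr ν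
    -- key facts
    have keyV₁ : ∀ v ∈ V₁, ν (prSS v) = -(ellL h₁ h₂ v) := by
      intro v hv
      have hm : Ψ v ∈ M' := Submodule.mem_sup_left ⟨v, hv, rfl⟩
      have h0 : ρ (Ψ v) = 0 := hρ0 _ hm
      have hsplit : (Ψ v : ((S → F) × (S → F)) × F)
          = (prSS v, 0) + (ellL h₁ h₂ v) • ((0, 1) : ((S → F) × (S → F)) × F) := by
        simp [hΨ, Prod.ext_iff]
      rw [hsplit, map_add, map_smul] at h0
      have : ρ (prSS v, 0) = -(ellL h₁ h₂ v * c) := by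
        rw [smul_eq_mul, ← hc] at h0
        linear_combination h0
      rw [hν]
      simp only [LinearMap.smul_apply, LinearMap.comp_apply, smul_eq_mul]
      have hinl : (LinearMap.inl F ((S → F) × (S → F)) F) (prSS v) = (prSS v, 0) := rfl
      rw [hinl, this]
      field_simp
    have keyV₂ : ∀ w ∈ V₂, ν w = 0 := by
      intro w hw
      have hm : ((w, 0) : ((S → F) × (S → F)) × F) ∈ M' :=
        Submodule.mem_sup_right ⟨w, hw, rfl⟩
      have h0 : ρ (w, 0) = 0 := hρ0 _ hm
      rw [hν]
      simp only [LinearMap.smul_apply, LinearMap.comp_apply, smul_eq_mul]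
      have hinl : (LinearMap.inl F ((S → F) × (S → F)) F) w = (w, 0) := rfl
      rw [hinl, h0, mul_zero]
    refine ⟨g₁, g₂, ?_, ?_⟩
    · rintro ⟨⟨f₁, p₁⟩, ⟨f₂, p₂⟩⟩ hv
      have hk : ν (f₁, f₂) = -(dotProd p₁ h₂ - dotProd p₂ h₁) := keyV₁ _ hv
      rw [hg] at hk
      show dotProd f₁ g₂ + dotProd p₁ h₂ + (dotProd f₂ (-g₁) + dotProd p₂ (-h₁)) = 0
      simp only [dotProd_neg_right]
      linear_combination hk
    · rintro ⟨f₁, f₂⟩ hw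
      have hk : ν (f₁, f₂) = 0 := keyV₂ _ hw
      rw [hg] at hk
      show dotProd f₁ g₂ + dotProd f₂ (-g₁) = 0
      rw [dotProd_neg_right]
      linear_combination hk

end Main

/-- Adjoints compose: if `V₁,V̂₁` are adjoints of each other and so are
`V₂,V̂₂`, then `V₁ ↔ V₂` and `V̂₁ ↔ V̂₂` are adjoints of each other; in
particular matched composition preserves reciprocity (self-adjointness). -/
theorem stmt9 (F S P : Type*) [Field F] [Fintype S] [Fintype P] :
    (∀ (V₁ W₁ : Submodule F (((S → F) × (P → F)) × ((S → F) × (P → F))))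
       (V₂ W₂ : Submodule F ((S → F) × (S → F))),
      ((W₁ : Set (((S → F) × (P → F)) × ((S → F) × (P → F))))
          = adjM (V₁ : Set (((S → F) × (P → F)) × ((S → F) × (P → F))))
        ∧ (V₁ : Set (((S → F) × (P → F)) × ((S → F) × (P → F))))
          = adjM (W₁ : Set (((S → F) × (P → F)) × ((S → F) × (P → F))))) →
      ((W₂ : Set ((S → F) × (S → F))) = adjFun (V₂ : Set ((S → F) × (S → F)))
        ∧ (V₂ : Set ((S → F) × (S → F))) = adjFun (W₂ : Set ((S → F) × (S → F)))) →
      (portComp (W₁ : Set (((S → F) × (P → F)) × ((S → F) × (P → F))))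
            (W₂ : Set ((S → F) × (S → F)))
          = adjFun (portComp (V₁ : Set (((S → F) × (P → F)) × ((S → F) × (P → F))))
              (V₂ : Set ((S → F) × (S → F))))
        ∧ portComp (V₁ : Set (((S → F) × (P → F)) × ((S → F) × (P → F))))
            (V₂ : Set ((S → F) × (S → F)))
          = adjFun (portComp (W₁ : Set (((S → F) × (P → F)) × ((S → F) × (P → F))))
              (W₂ : Set ((S → F) × (S → F))))))
    ∧ (∀ (V₁ : Submodule F (((S → F) × (P → F)) × ((S → F) × (P → F))))
         (V₂ : Submodule F ((S → F) × (S → F))),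
      adjM (V₁ : Set (((S → F) × (P → F)) × ((S → F) × (P → F))))
          = (V₁ : Set (((S → F) × (P → F)) × ((S → F) × (P → F)))) →
      adjFun (V₂ : Set ((S → F) × (S → F))) = (V₂ : Set ((S → F) × (S → F))) →
      adjFun (portComp (V₁ : Set (((S → F) × (P → F)) × ((S → F) × (P → F))))
            (V₂ : Set ((S → F) × (S → F))))
        = portComp (V₁ : Set (((S → F) × (P → F)) × ((S → F) × (P → F))))
            (V₂ : Set ((S → F) × (S → F)))) := by
  constructor
  · rintro V₁ W₁ V₂ W₂ ⟨h1, h2⟩ ⟨h3, h4⟩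
    constructor
    · rw [h1, h3]; exact main_lemma V₁ V₂
    · rw [h2, h4]; exact main_lemma W₁ W₂
  · intro V₁ V₂ h1 h2
    rw [← main_lemma V₁ V₂, h1, h2]
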